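/- Let d ≥ 1, let σ be the uniform probability measure on the unit sphere S^{d−1} ⊂ ℝ^d, let H be a symmetric positive definite d×d real matrix with μ·I ⪯ H ⪯ L·I for some 0 < μ ≤ L, and let g ∈ ℝ^d be nonzero. Then ∫_{S^{d−1}} (uᵀg)² / ((uᵀHu)·(gᵀH⁻¹g)) dσ(u) ≥ μ/(dL). -/

import Mathlib

open MeasureTheory

section Aux

open Real Matrix Metric Set

/-- Integrability of `t^n * exp(-t²)` for `n ≤ 2`. -/
lemma integrable_pow_mul_gauss (n : ℕ) (hn : n ≤ 2) :
    Integrable (fun t : ℝ => t ^ n * Real.exp (-t ^ 2)) := by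
  interval_cases n
  · simpa using integrable_exp_neg_mul_sq (one_pos)
  · simpa using integrable_mul_exp_neg_mul_sq (one_pos)
  · have hint : Integrable (fun t : ℝ => 2 * Real.exp (-(1/2 : ℝ) * t ^ 2)) :=
      (integrable_exp_neg_mul_sq (by norm_num)).const_mul 2
    refine hint.mono' ?_ (Filter.Eventually.of_forall fun t => ?_)
    · exact (measurable_id.pow_const 2).mul
        ((measurable_id.pow_const 2).neg.exp) |>.aestronglyMeasurable
    · have h1 : t ^ 2 / 2 ≤ Real.exp (t ^ 2 / 2) :=
        le_trans (by linarith) (Real.add_one_le_exp _)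
      have h2 : t ^ 2 ≤ 2 * Real.exp (t ^ 2 / 2) := by linarith
      have hb : t ^ 2 * Real.exp (-t ^ 2) ≤ 2 * Real.exp (t ^ 2 / 2) * Real.exp (-t ^ 2) :=
        mul_le_mul_of_nonneg_right h2 (Real.exp_nonneg _)
      rw [Real.norm_eq_abs, abs_of_nonneg (by positivity)]
      calc t ^ 2 * Real.exp (-t ^ 2) ≤ 2 * Real.exp (t ^ 2 / 2) * Real.exp (-t ^ 2) := hb
        _ = 2 * Real.exp (-(1/2 : ℝ) * t ^ 2) := by
            rw [mul_assoc, ← Real.exp_add]; ring_nf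

lemma gauss_odd_zero : ∫ t : ℝ, t * Real.exp (-t ^ 2) = 0 := by
  have hmp : MeasurePreserving (fun t : ℝ => -t) volume volume :=
    ⟨measurable_neg, Measure.map_neg_eq_self _⟩
  have h := hmp.integral_comp (Homeomorph.neg ℝ).measurableEmbedding
    (fun t : ℝ => t * Real.exp (-t ^ 2))
  have h1 : (∫ t : ℝ, (-t) * Real.exp (-(-t) ^ 2)) = ∫ t : ℝ, t * Real.exp (-t ^ 2) := h
  have h2 : (∫ t : ℝ, (-t) * Real.exp (-(-t) ^ 2)) = - ∫ t : ℝ, t * Real.exp (-t ^ 2) := by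
    rw [← integral_neg]
    congr 1; funext t
    have : (-t) ^ 2 = t ^ 2 := by ring
    rw [this]; ring
  linarith [h1, h2.symm]

lemma gauss_even_pos : 0 < ∫ t : ℝ, t ^ 2 * Real.exp (-t ^ 2) := by
  rw [integral_pos_iff_support_of_nonneg (fun t => by positivity)
    (integrable_pow_mul_gauss 2 le_rfl)]
  have hs : Function.support (fun t : ℝ => t ^ 2 * Real.exp (-t ^ 2)) = {0}ᶜ := by
    ext t
    simp only [Function.mem_support, Set.mem_compl_iff, Set.mem_singleton_iff]
    constructor
    · intro h h0; simp [h0] at h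
    · intro h0; positivity
  rw [hs, Set.compl_eq_univ_diff, measure_diff_null (measure_singleton _)]
  simp [Real.volume_univ]

lemma gauss_zero_pos : 0 < ∫ t : ℝ, Real.exp (-t ^ 2) := by
  have h : ∫ t : ℝ, Real.exp (-t ^ 2) = Real.sqrt (π / 1) := by
    rw [← integral_gaussian 1]; norm_num
  rw [h]; positivity

/-- Gaussian second moment on the product space. -/
lemma gauss_moment_pi (d : ℕ) (g : Fin d → ℝ) :
    ∫ x : Fin d → ℝ, (∑ i, x i * g i) ^ 2 * Real.exp (-∑ i, (x i) ^ 2)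
      = (∑ i, g i ^ 2) *
        ((∫ t : ℝ, t ^ 2 * Real.exp (-t ^ 2)) * (∫ t : ℝ, Real.exp (-t ^ 2)) ^ (d - 1)) := by
  classical
  set I2 := ∫ t : ℝ, t ^ 2 * Real.exp (-t ^ 2) with hI2
  set I0 := ∫ t : ℝ, Real.exp (-t ^ 2) with hI0
  set e : Fin d → Fin d → Fin d → ℕ := fun i j k =>
    (if k = i then 1 else 0) + (if k = j then 1 else 0) with he
  have he2 : ∀ i j k, e i j k ≤ 2 := by
    intro i j k; simp only [he]; split <;> split <;> norm_num
  set P : Fin d → Fin d → (Fin d → ℝ) → ℝ := fun i j x =>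
    ∏ k, (x k ^ (e i j k) * Real.exp (-(x k) ^ 2)) with hP
  have ha : ∀ (i j) (x : Fin d → ℝ), P i j x = x i * x j * Real.exp (-∑ k, (x k) ^ 2) := by
    intro i j x
    have h : P i j x = (∏ k, x k ^ (e i j k)) * ∏ k, Real.exp (-(x k) ^ 2) := by
      simp only [hP]; exact Finset.prod_mul_distrib
    rw [h]
    have hexp : ∏ k, Real.exp (-(x k) ^ 2) = Real.exp (-∑ k, (x k) ^ 2) := by
      rw [← Real.exp_sum]; congr 1; rw [← Finset.sum_neg_distrib]
    rw [hexp]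
    congr 1
    have h2 : ∀ k, x k ^ (e i j k) =
        (if k = i then x k else 1) * (if k = j then x k else 1) := by
      intro k; simp only [he]
      split <;> split <;> simp [pow_add, sq]
    rw [Finset.prod_congr rfl (fun k _ => h2 k), Finset.prod_mul_distrib]
    simp [Finset.prod_ite_eq']
  have hb : ∀ i j, Integrable (P i j) := by
    intro i j
    exact Integrable.fintype_prod (f := fun k t => t ^ (e i j k) * Real.exp (-t ^ 2))
      (fun k => integrable_pow_mul_gauss _ (he2 i j k))
  have hc : ∀ i j, ∫ x, P i j x = if i = j then I2 * I0 ^ (d - 1) else 0 := by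
    intro i j
    simp only [hP]
    rw [volume_pi, integral_fintype_prod_eq_prod (f := fun k t => t ^ (e i j k) * Real.exp (-t ^ 2))]
    by_cases hij : i = j
    · subst hij
      simp only [if_true]
      have hei : e i i i = 2 := by simp [he]
      have hek : ∀ k, k ≠ i → e i i k = 0 := by intro k hk; simp [he, hk]
      rw [← Finset.mul_prod_erase Finset.univ _ (Finset.mem_univ i), hei]
      have h3 : ∀ k ∈ Finset.univ.erase i,
          (∫ t : ℝ, t ^ (e i i k) * Real.exp (-t ^ 2)) = I0 := by
        intro k hk
        rw [hek k (Finset.mem_erase.1 hk).1]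
        simp [hI0]
      rw [Finset.prod_congr rfl h3, Finset.prod_const, Finset.card_erase_of_mem
        (Finset.mem_univ i), Finset.card_univ, Fintype.card_fin]
    · simp only [hij, if_false]
      apply Finset.prod_eq_zero (Finset.mem_univ i)
      have h4 : e i j i = 1 := by simp [he, hij]
      rw [h4]
      simpa using gauss_odd_zero
  calc ∫ x : Fin d → ℝ, (∑ i, x i * g i) ^ 2 * Real.exp (-∑ i, (x i) ^ 2)
      = ∫ x : Fin d → ℝ, ∑ i, ∑ j, g i * g j * P i j x := by
        congr 1; funext x
        rw [Finset.sum_congr rfl (fun i _ => Finset.sum_congr rfl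
          (fun j _ => by rw [ha i j x]))]
        rw [sq, Finset.sum_mul_sum]
        rw [Finset.sum_mul]
        congr 1; funext i
        rw [Finset.sum_mul]
        congr 1; funext j
        ring
    _ = ∑ i, ∑ j, g i * g j * ∫ x, P i j x := by
        rw [integral_finset_sum _ (fun i _ => integrable_finset_sum _
          (fun j _ => ((hb i j).const_mul _)))]
        congr 1; funext i
        rw [integral_finset_sum _ (fun j _ => ((hb i j).const_mul _))]
        congr 1; funext j
        exact integral_const_mul _ _
    _ = (∑ i, g i ^ 2) * (I2 * I0 ^ (d - 1)) := by
        rw [Finset.sum_congr rfl (fun i _ => Finset.sum_congr rfl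
          (fun j _ => by rw [hc i j]))]
        simp only [mul_ite, mul_zero, Finset.sum_ite_eq, Finset.mem_univ, if_true]
        rw [Finset.sum_mul]
        congr 1; funext i
        ring

/-- Polar decomposition of the Gaussian moment integral. -/
lemma sphere_moment_eq (d : ℕ) (hd : 1 ≤ d) (g : Fin d → ℝ) :
    (∫ u : sphere (0 : EuclideanSpace ℝ (Fin d)) 1,
        (∑ i, (u : EuclideanSpace ℝ (Fin d)) i * g i) ^ 2
        ∂((volume : Measure (EuclideanSpace ℝ (Fin d))).toSphere)) *
      (∫ r : Ioi (0 : ℝ), (r : ℝ) ^ 2 * Real.exp (-(r : ℝ) ^ 2)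
        ∂(Measure.volumeIoiPow (Module.finrank ℝ (EuclideanSpace ℝ (Fin d)) - 1)))
    = ∫ x : EuclideanSpace ℝ (Fin d), (∑ i, x i * g i) ^ 2 * Real.exp (-‖x‖ ^ 2) := by
  haveI : Nonempty (Fin d) := ⟨⟨0, hd⟩⟩
  haveI : Nontrivial (EuclideanSpace ℝ (Fin d)) := inferInstance
  set E := EuclideanSpace ℝ (Fin d)
  set F : E → ℝ := fun x => (∑ i, x i * g i) ^ 2 * Real.exp (-‖x‖ ^ 2) with hF
  set G : sphere (0 : E) 1 × Ioi (0 : ℝ) → ℝ := fun p =>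
    (∑ i, (p.1 : E) i * g i) ^ 2 * ((p.2 : ℝ) ^ 2 * Real.exp (-(p.2 : ℝ) ^ 2)) with hG
  have h1 : ∫ x : E, F x = ∫ x : ({0}ᶜ : Set E), F x.val ∂(volume.comap Subtype.val) := by
    rw [integral_subtype_comap (measurableSet_singleton (0:E)).compl]
    rw [restrict_compl_singleton]
  have h2 := ((volume : Measure E).measurePreserving_homeomorphUnitSphereProd).integral_comp
    (Homeomorph.measurableEmbedding _) G
  have h3 : ∀ x : ({0}ᶜ : Set E), G (homeomorphUnitSphereProd E x) = F x.val := by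
    rintro ⟨x, hx⟩
    have hx0 : x ≠ 0 := hx
    have hn : ‖x‖ ≠ 0 := norm_ne_zero_iff.2 hx0
    simp only [hG, hF, homeomorphUnitSphereProd_apply_fst_coe,
      homeomorphUnitSphereProd_apply_snd_coe]
    have hcoord : ∀ i, (‖x‖⁻¹ • x : E) i = ‖x‖⁻¹ * x i := fun i => rfl
    simp only [hcoord]
    have hsum : ∑ i, ‖x‖⁻¹ * x i * g i = ‖x‖⁻¹ * ∑ i, x i * g i := by
      rw [Finset.mul_sum]; congr 1; funext i; ring
    rw [hsum, mul_pow]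
    field_simp
  have h4 : ∫ p, G p ∂(((volume : Measure E).toSphere).prod
      (Measure.volumeIoiPow (Module.finrank ℝ E - 1)))
      = (∫ u : sphere (0 : E) 1, (∑ i, (u : E) i * g i) ^ 2
          ∂((volume : Measure E).toSphere)) *
        (∫ r : Ioi (0 : ℝ), (r : ℝ) ^ 2 * Real.exp (-(r : ℝ) ^ 2)
          ∂(Measure.volumeIoiPow (Module.finrank ℝ E - 1))) :=
    integral_prod_mul (μ := (volume : Measure E).toSphere)
      (ν := Measure.volumeIoiPow (Module.finrank ℝ E - 1))
      (f := fun u : sphere (0 : E) 1 => (∑ i, (u : E) i * g i) ^ 2)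
      (g := fun r : Ioi (0 : ℝ) => (r : ℝ) ^ 2 * Real.exp (-(r : ℝ) ^ 2))
  rw [← h4, ← h2, h1]
  refine integral_congr_ae (Filter.Eventually.of_forall (fun x => ?_))
  show G (homeomorphUnitSphereProd E x) = F x.val
  exact h3 x

lemma euclidean_to_pi (d : ℕ) (g : Fin d → ℝ) :
    ∫ x : EuclideanSpace ℝ (Fin d), (∑ i, x i * g i) ^ 2 * Real.exp (-‖x‖ ^ 2)
      = ∫ y : Fin d → ℝ, (∑ i, y i * g i) ^ 2 * Real.exp (-∑ i, (y i) ^ 2) := by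
  have h := (EuclideanSpace.volume_preserving_symm_measurableEquiv_toLp (Fin d)).symm
  rw [← h.integral_comp (MeasurableEquiv.measurableEmbedding _)]
  congr 1; funext y
  have hcoord : ∀ i, ((MeasurableEquiv.toLp 2 (Fin d → ℝ)) y :
      EuclideanSpace ℝ (Fin d)) i = y i := fun i => rfl
  have hnorm : ‖((MeasurableEquiv.toLp 2 (Fin d → ℝ)) y :
      EuclideanSpace ℝ (Fin d))‖ ^ 2 = ∑ i, (y i) ^ 2 := by
    rw [EuclideanSpace.norm_eq]
    rw [Real.sq_sqrt (Finset.sum_nonneg fun i _ => sq_nonneg _)]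
    congr 1; funext i; rw [hcoord, Real.norm_eq_abs, sq_abs]
  simp only [MeasurableEquiv.symm_symm, hcoord, hnorm]

lemma quadform_inv_bounds (d : ℕ) (H : Matrix (Fin d) (Fin d) ℝ) (hH : H.PosDef)
    (μ : ℝ) (hμ : 0 < μ)
    (hlow : ∀ u : Fin d → ℝ, μ * ∑ i, u i * u i ≤ ∑ i, ∑ j, u i * H i j * u j)
    (g : Fin d → ℝ) (hg : g ≠ 0) :
    0 < ∑ i, ∑ j, g i * H⁻¹ i j * g j ∧
      ∑ i, ∑ j, g i * H⁻¹ i j * g j ≤ (∑ i, g i * g i) / μ := by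
  classical
  set w : Fin d → ℝ := H⁻¹ *ᵥ g with hw
  have hwi : ∀ i, w i = ∑ j, H⁻¹ i j * g j := fun i => rfl
  have hR_eq : ∑ i, ∑ j, g i * H⁻¹ i j * g j = g ⬝ᵥ w := by
    rw [dotProduct]
    refine Finset.sum_congr rfl fun i _ => ?_
    rw [hwi i, Finset.mul_sum]
    exact Finset.sum_congr rfl fun j _ => by ring
  have hRpos : 0 < g ⬝ᵥ w := by
    have := (hH.inv).dotProduct_mulVec_pos hg
    simpa [hw] using this
  have hHw : H *ᵥ w = g := by
    rw [hw, Matrix.mulVec_mulVec, Matrix.mul_nonsing_inv _ hH.det_pos.ne'.isUnit,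
      Matrix.one_mulVec]
  have hgw : g ⬝ᵥ w = ∑ i, ∑ j, w i * H i j * w j := by
    calc g ⬝ᵥ w = (H *ᵥ w) ⬝ᵥ w := by rw [hHw]
      _ = w ⬝ᵥ (H *ᵥ w) := dotProduct_comm _ _
      _ = ∑ i, ∑ j, w i * H i j * w j := by
          rw [dotProduct]
          refine Finset.sum_congr rfl fun i _ => ?_
          have h : (H *ᵥ w) i = ∑ j, H i j * w j := rfl
          rw [h, Finset.mul_sum]
          exact Finset.sum_congr rfl fun j _ => by ring
  have h1 : μ * ∑ i, w i * w i ≤ g ⬝ᵥ w := by rw [hgw]; exact hlow w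
  have hCS : (g ⬝ᵥ w) ^ 2 ≤ (∑ i, g i * g i) * (∑ i, w i * w i) := by
    have h := Finset.sum_mul_sq_le_sq_mul_sq Finset.univ g w
    rw [dotProduct]
    calc (∑ i, g i * w i) ^ 2 ≤ (∑ i, g i ^ 2) * (∑ i, w i ^ 2) := h
      _ = (∑ i, g i * g i) * (∑ i, w i * w i) := by
          simp only [sq]
  constructor
  · rw [hR_eq]; exact hRpos
  · rw [hR_eq, le_div_iff₀ hμ]
    have hS : (0:ℝ) ≤ ∑ i, g i * g i :=
      Finset.sum_nonneg (fun i _ => mul_self_nonneg (g i))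
    nlinarith [hCS, h1, hRpos, hμ, hS, mul_le_mul_of_nonneg_left h1 hS,
      mul_le_mul_of_nonneg_left hCS hμ.le]

end Aux

/-- The uniform probability measure on the unit sphere of `ℝ^d`: the normalized
surface measure obtained from Lebesgue measure via `Measure.toSphere`. -/
noncomputable def uniformSphere (d : ℕ) :
    Measure (Metric.sphere (0 : EuclideanSpace ℝ (Fin d)) 1) :=
  ((volume : Measure (EuclideanSpace ℝ (Fin d))).toSphere Set.univ)⁻¹ •
    (volume : Measure (EuclideanSpace ℝ (Fin d))).toSphere

/-- Let `σ` be the uniform probability measure on the unit sphere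
`S^{d−1} ⊂ ℝ^d`, `H` a symmetric positive definite matrix with `μ·I ⪯ H ⪯ L·I`
(`0 < μ ≤ L`), and `g ≠ 0`.  Then
`∫ (uᵀg)²/((uᵀHu)·(gᵀH⁻¹g)) dσ(u) ≥ μ/(dL)`. -/
theorem eta_uniform_sphere_lower_bound (d : ℕ) (hd : 1 ≤ d)
    (H : Matrix (Fin d) (Fin d) ℝ) (hH : H.PosDef)
    (μ L : ℝ) (hμ : 0 < μ) (hμL : μ ≤ L)
    (hlow : ∀ u : Fin d → ℝ, μ * ∑ i, u i * u i ≤ ∑ i, ∑ j, u i * H i j * u j)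
    (hup : ∀ u : Fin d → ℝ, ∑ i, ∑ j, u i * H i j * u j ≤ L * ∑ i, u i * u i)
    (g : Fin d → ℝ) (hg : g ≠ 0) :
    μ / (d * L) ≤
      ∫ u : Metric.sphere (0 : EuclideanSpace ℝ (Fin d)) 1,
        (∑ i, (u : EuclideanSpace ℝ (Fin d)) i * g i) ^ 2 /
          ((∑ i, ∑ j, (u : EuclideanSpace ℝ (Fin d)) i * H i j *
              (u : EuclideanSpace ℝ (Fin d)) j) *
            (∑ i, ∑ j, g i * H⁻¹ i j * g j)) ∂(uniformSphere d) := by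
  classical
  haveI : Nonempty (Fin d) := ⟨⟨0, hd⟩⟩
  set σs := (volume : Measure (EuclideanSpace ℝ (Fin d))).toSphere with hσs
  haveI hfinσ : IsFiniteMeasure σs :=
    inferInstanceAs (IsFiniteMeasure ((volume : Measure (EuclideanSpace ℝ (Fin d))).toSphere))
  haveI : IsFiniteMeasureOnCompacts σs :=
    ⟨fun _K _hK => lt_of_le_of_lt (measure_mono (Set.subset_univ _)) (measure_lt_top σs _)⟩
  -- coordinates are continuous
  have hccoord : ∀ i, Continuous fun u : Metric.sphere (0 : EuclideanSpace ℝ (Fin d)) 1 => (u : EuclideanSpace ℝ (Fin d)) i := by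
    intro i
    exact (continuous_apply i).comp ((PiLp.continuous_ofLp 2 _).comp continuous_subtype_val)
  -- the sphere constraint
  have hu1 : ∀ u : Metric.sphere (0 : EuclideanSpace ℝ (Fin d)) 1, ∑ i, (u : EuclideanSpace ℝ (Fin d)) i *
      (u : EuclideanSpace ℝ (Fin d)) i = 1 := by
    intro u
    have hu : ‖(u : EuclideanSpace ℝ (Fin d))‖ = 1 := by
      simpa using mem_sphere_zero_iff_norm.mp u.2
    have h2 : Real.sqrt (∑ i, ‖(u : EuclideanSpace ℝ (Fin d)) i‖ ^ 2) = 1 := by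
      rw [← EuclideanSpace.norm_eq]; exact hu
    have h3 : ∑ i, ‖(u : EuclideanSpace ℝ (Fin d)) i‖ ^ 2 = 1 := by
      have hnn : (0:ℝ) ≤ ∑ i, ‖(u : EuclideanSpace ℝ (Fin d)) i‖ ^ 2 :=
        Finset.sum_nonneg fun i _ => sq_nonneg _
      rw [← Real.sq_sqrt hnn, h2]; norm_num
    calc ∑ i, (u : EuclideanSpace ℝ (Fin d)) i * (u : EuclideanSpace ℝ (Fin d)) i
        = ∑ i, ‖(u : EuclideanSpace ℝ (Fin d)) i‖ ^ 2 := by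
          refine Finset.sum_congr rfl fun i _ => ?_
          rw [Real.norm_eq_abs, sq_abs, sq]
      _ = 1 := h3
  -- integrability of continuous functions on the sphere
  have hint : ∀ f : Metric.sphere (0 : EuclideanSpace ℝ (Fin d)) 1 → ℝ, Continuous f → Integrable f σs := by
    intro f hf
    refine hf.integrable_of_hasCompactSupport ?_
    exact IsCompact.of_isClosed_subset isCompact_univ (isClosed_tsupport f) (Set.subset_univ _)
  -- constants
  set I2 := ∫ t : ℝ, t ^ 2 * Real.exp (-t ^ 2) with hI2
  set I0 := ∫ t : ℝ, Real.exp (-t ^ 2) with hI0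
  set K := I2 * I0 ^ (d - 1) with hK
  have hKpos : 0 < K := mul_pos gauss_even_pos (pow_pos gauss_zero_pos _)
  set C := ∫ r : Set.Ioi (0 : ℝ), (r : ℝ) ^ 2 * Real.exp (-(r : ℝ) ^ 2)
    ∂(Measure.volumeIoiPow (Module.finrank ℝ (EuclideanSpace ℝ (Fin d)) - 1)) with hC
  -- the key moment identity
  have key : ∀ gg : Fin d → ℝ,
      (∫ u : Metric.sphere (0 : EuclideanSpace ℝ (Fin d)) 1, (∑ i, (u : EuclideanSpace ℝ (Fin d)) i * gg i) ^ 2 ∂σs) * C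
        = (∑ i, gg i ^ 2) * K := by
    intro gg
    rw [hσs, hC, sphere_moment_eq d hd gg, euclidean_to_pi d gg, gauss_moment_pi d gg]
  -- total mass
  set T := σs Set.univ with hT
  have hTtop : T ≠ ⊤ := measure_ne_top σs _
  have hT0 : T ≠ 0 := by
    rw [hT, Measure.toSphere_apply_univ]
    have hd0 : (Module.finrank ℝ (EuclideanSpace ℝ (Fin d)) : ENNReal) ≠ 0 := by
      simp only [finrank_euclideanSpace_fin]
      exact_mod_cast Nat.one_le_iff_ne_zero.mp hd
    exact mul_ne_zero hd0 (Metric.measure_ball_pos _ _ one_pos).ne'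
  set Treal := T.toReal with hTreal
  have hTpos : 0 < Treal := ENNReal.toReal_pos hT0 hTtop
  -- sum of coordinate moments
  have hbasis : ∀ i0 : Fin d,
      (∫ u : Metric.sphere (0 : EuclideanSpace ℝ (Fin d)) 1, ((u : EuclideanSpace ℝ (Fin d)) i0) ^ 2 ∂σs) * C = K := by
    intro i0
    have h := key (fun k => if k = i0 then 1 else 0)
    have h1 : ∀ u : Metric.sphere (0 : EuclideanSpace ℝ (Fin d)) 1, (∑ i, (u : EuclideanSpace ℝ (Fin d)) i *
        (if i = i0 then (1:ℝ) else 0)) = (u : EuclideanSpace ℝ (Fin d)) i0 := by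
      intro u
      simp [mul_ite, Finset.sum_ite_eq]
    have h2 : (∑ i, (if i = i0 then (1:ℝ) else 0) ^ 2) = 1 := by
      simp [ite_pow, Finset.sum_ite_eq]
    rw [h2, one_mul] at h
    rw [← h]
    congr 1
    refine integral_congr_ae (Filter.Eventually.of_forall fun u => ?_)
    show ((u : EuclideanSpace ℝ (Fin d)) i0) ^ 2
        = (∑ i, (u : EuclideanSpace ℝ (Fin d)) i * if i = i0 then 1 else 0) ^ 2
    rw [h1 u]
  have hsumS : (∑ i0, ∫ u : Metric.sphere (0 : EuclideanSpace ℝ (Fin d)) 1, ((u : EuclideanSpace ℝ (Fin d)) i0) ^ 2 ∂σs) = Treal := by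
    rw [← integral_finset_sum _ (fun i0 _ => hint _ (by
      exact (hccoord i0).pow 2))]
    have : ∀ u : Metric.sphere (0 : EuclideanSpace ℝ (Fin d)) 1, (∑ i0, ((u : EuclideanSpace ℝ (Fin d)) i0) ^ 2) = 1 := by
      intro u
      calc (∑ i0, ((u : EuclideanSpace ℝ (Fin d)) i0) ^ 2)
          = ∑ i0, (u : EuclideanSpace ℝ (Fin d)) i0 * (u : EuclideanSpace ℝ (Fin d)) i0 :=
            Finset.sum_congr rfl fun i _ => pow_two ((u : EuclideanSpace ℝ (Fin d)) i)
        _ = 1 := hu1 u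
    rw [integral_congr_ae (Filter.Eventually.of_forall fun u => this u)]
    simp [hTreal, hT, smul_eq_mul, Measure.real]
  have hTC : Treal * C = d * K := by
    have h := Finset.sum_congr rfl (fun i0 (_ : i0 ∈ Finset.univ) => hbasis i0)
    rw [← Finset.sum_mul, hsumS] at h
    simpa using h
  have hCpos : 0 < C := by
    have h1 : 0 < Treal * C := by
      rw [hTC]
      have : (0:ℝ) < d := by exact_mod_cast hd
      positivity
    nlinarith [hTpos]
  -- the sphere moment for g
  have hSg : (∫ u : Metric.sphere (0 : EuclideanSpace ℝ (Fin d)) 1, (∑ i, (u : EuclideanSpace ℝ (Fin d)) i * g i) ^ 2 ∂σs)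
      = (∑ i, g i ^ 2) * Treal / d := by
    have e1 := key g
    have hd0 : (0:ℝ) < d := by exact_mod_cast hd
    have h6 : ((∫ u : Metric.sphere (0 : EuclideanSpace ℝ (Fin d)) 1, (∑ i, (u : EuclideanSpace ℝ (Fin d)) i * g i) ^ 2 ∂σs) * d) * K
        = ((∑ i, g i ^ 2) * Treal) * K := by
      linear_combination Treal * e1 - (∫ u : Metric.sphere (0 : EuclideanSpace ℝ (Fin d)) 1, (∑ i, (u : EuclideanSpace ℝ (Fin d)) i
        * g i) ^ 2 ∂σs) * hTC
    have h7 := mul_right_cancel₀ hKpos.ne' h6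
    field_simp
    linarith [h7]
  -- bounds on the quadratic forms
  have hL : 0 < L := lt_of_lt_of_le hμ hμL
  have hgs : 0 < ∑ i, g i * g i := by
    obtain ⟨i, hi⟩ := Function.ne_iff.mp hg
    exact Finset.sum_pos' (fun j _ => mul_self_nonneg (g j))
      ⟨i, Finset.mem_univ i, mul_self_pos.mpr hi⟩
  obtain ⟨hRpos, hRle⟩ := quadform_inv_bounds d H hH μ hμ hlow g hg
  set R := ∑ i, ∑ j, g i * H⁻¹ i j * g j with hR
  -- pointwise lower bound
  set c0 := μ / (L * ∑ i, g i * g i) with hc0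
  have hc0pos : 0 < c0 := div_pos hμ (mul_pos hL hgs)
  have hpoint : ∀ u : Metric.sphere (0 : EuclideanSpace ℝ (Fin d)) 1,
      c0 * (∑ i, (u : EuclideanSpace ℝ (Fin d)) i * g i) ^ 2 ≤
        (∑ i, (u : EuclideanSpace ℝ (Fin d)) i * g i) ^ 2 /
          ((∑ i, ∑ j, (u : EuclideanSpace ℝ (Fin d)) i * H i j *
            (u : EuclideanSpace ℝ (Fin d)) j) * R) := by
    intro u
    set Q := ∑ i, ∑ j, (u : EuclideanSpace ℝ (Fin d)) i * H i j *
      (u : EuclideanSpace ℝ (Fin d)) j with hQ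
    have hQge : μ ≤ Q := by
      have := hlow (u : EuclideanSpace ℝ (Fin d))
      rwa [hu1 u, mul_one] at this
    have hQle : Q ≤ L := by
      have := hup (u : EuclideanSpace ℝ (Fin d))
      rwa [hu1 u, mul_one] at this
    have hQpos : 0 < Q := lt_of_lt_of_le hμ hQge
    have hQRpos : 0 < Q * R := mul_pos hQpos hRpos
    have hQRle : Q * R ≤ L * ((∑ i, g i * g i) / μ) :=
      mul_le_mul hQle hRle hRpos.le hL.le
    calc c0 * (∑ i, (u : EuclideanSpace ℝ (Fin d)) i * g i) ^ 2
        = (∑ i, (u : EuclideanSpace ℝ (Fin d)) i * g i) ^ 2 *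
            (1 / (L * ((∑ i, g i * g i) / μ))) := by
          rw [hc0]; field_simp
      _ ≤ (∑ i, (u : EuclideanSpace ℝ (Fin d)) i * g i) ^ 2 * (1 / (Q * R)) := by
          refine mul_le_mul_of_nonneg_left ?_ (sq_nonneg _)
          exact one_div_le_one_div_of_le hQRpos hQRle
      _ = (∑ i, (u : EuclideanSpace ℝ (Fin d)) i * g i) ^ 2 / (Q * R) := by
          rw [mul_one_div]
  -- integrability of the full integrand
  have hfcont : Continuous (fun u : Metric.sphere (0 : EuclideanSpace ℝ (Fin d)) 1 =>
      (∑ i, (u : EuclideanSpace ℝ (Fin d)) i * g i) ^ 2 /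
        ((∑ i, ∑ j, (u : EuclideanSpace ℝ (Fin d)) i * H i j *
          (u : EuclideanSpace ℝ (Fin d)) j) * R)) := by
    have hnum : Continuous (fun u : Metric.sphere (0 : EuclideanSpace ℝ (Fin d)) 1 =>
        (∑ i, (u : EuclideanSpace ℝ (Fin d)) i * g i) ^ 2) := by
      refine (Continuous.pow ?_ 2)
      exact continuous_finset_sum _ (fun i _ => (hccoord i).mul continuous_const)
    have hden : Continuous (fun u : Metric.sphere (0 : EuclideanSpace ℝ (Fin d)) 1 =>
        (∑ i, ∑ j, (u : EuclideanSpace ℝ (Fin d)) i * H i j *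
          (u : EuclideanSpace ℝ (Fin d)) j) * R) := by
      refine Continuous.mul ?_ continuous_const
      exact continuous_finset_sum _ (fun i _ => continuous_finset_sum _
        (fun j _ => ((hccoord i).mul continuous_const).mul (hccoord j)))
    refine hnum.div hden ?_
    intro u
    have hQge : μ ≤ ∑ i, ∑ j, (u : EuclideanSpace ℝ (Fin d)) i * H i j *
        (u : EuclideanSpace ℝ (Fin d)) j := by
      have := hlow (u : EuclideanSpace ℝ (Fin d))
      rwa [hu1 u, mul_one] at this
    exact (mul_pos (lt_of_lt_of_le hμ hQge) hRpos).ne'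
  have hfint : Integrable (fun u : Metric.sphere (0 : EuclideanSpace ℝ (Fin d)) 1 =>
      (∑ i, (u : EuclideanSpace ℝ (Fin d)) i * g i) ^ 2 /
        ((∑ i, ∑ j, (u : EuclideanSpace ℝ (Fin d)) i * H i j *
          (u : EuclideanSpace ℝ (Fin d)) j) * R)) (uniformSphere d) := by
    have h := hint _ hfcont
    have : uniformSphere d = T⁻¹ • σs := rfl
    rw [this]
    exact h.smul_measure (ENNReal.inv_ne_top.mpr hT0)
  -- compute the integral of the lower bound
  have hqint : ∫ u : Metric.sphere (0 : EuclideanSpace ℝ (Fin d)) 1, (∑ i, (u : EuclideanSpace ℝ (Fin d)) i * g i) ^ 2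
      ∂(uniformSphere d) = (∑ i, g i ^ 2) / d := by
    have h1 : uniformSphere d = T⁻¹ • σs := rfl
    rw [h1, integral_smul_measure, hSg]
    rw [ENNReal.toReal_inv, ← hTreal]
    have hd0 : (0:ℝ) < d := by exact_mod_cast hd
    rw [smul_eq_mul]
    field_simp
  have hnonneg : ∀ u : Metric.sphere (0 : EuclideanSpace ℝ (Fin d)) 1,
      0 ≤ c0 * (∑ i, (u : EuclideanSpace ℝ (Fin d)) i * g i) ^ 2 := fun u => by positivity
  have hmono := integral_mono_of_nonneg (Filter.Eventually.of_forall hnonneg)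
    hfint (Filter.Eventually.of_forall hpoint)
  have hleft : ∫ u : Metric.sphere (0 : EuclideanSpace ℝ (Fin d)) 1, c0 * (∑ i, (u : EuclideanSpace ℝ (Fin d)) i * g i) ^ 2
      ∂(uniformSphere d) = μ / (d * L) := by
    rw [integral_const_mul, hqint, hc0]
    have hd0 : (0:ℝ) < d := by exact_mod_cast hd
    have hgs2 : ∑ i, g i ^ 2 = ∑ i, g i * g i := by
      exact Finset.sum_congr rfl fun i _ => sq (g i)
    rw [hgs2]
    field_simp
    ring
    exact mul_inv_cancel₀ (by rw [hgs2]; exact hgs.ne')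
  rw [← hleft]
  exact hmono
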